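/- Define C(j_2, j_1) = ∫_t^T φ_{j_2}(s) ( ∫_t^s φ_{j_1}(u) du ) ds for j_1, j_2 ≥ 0. Then C(0,0) = Δ/2; for every i ≥ 1, C(i, i−1) = Δ/(2√(4i² − 1)) and C(i−1, i) = −Δ/(2√(4i² − 1)); and C(j_2, j_1) = 0 in all remaining cases (in particular C(j, j) = 0 for all j ≥ 1, and C(j_2, j_1) = 0 whenever |j_1 − j_2| ≥ 2). -/

import Mathlib

open MeasureTheory

/-- The `n`-th Legendre polynomial via Rodrigues' formula. -/
noncomputable def legendreP (n : ℕ) (x : ℝ) : ℝ :=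
  (1 / (2 ^ n * (n.factorial : ℝ))) * iteratedDeriv n (fun y => (y ^ 2 - 1) ^ n) x

/-- The scaled Legendre functions on `[t, T]`. -/
noncomputable def scaledLegendre (t T : ℝ) (j : ℕ) (x : ℝ) : ℝ :=
  Real.sqrt ((2 * j + 1) / (T - t)) * legendreP j (2 * (x - t) / (T - t) - 1)

open Polynomial

noncomputable def legPoly (n : ℕ) : Polynomial ℝ :=
  Polynomial.C (1 / (2 ^ n * (n.factorial : ℝ))) * derivative^[n] ((X ^ 2 - 1) ^ n)

lemma iteratedDeriv_polyeval (p : Polynomial ℝ) (n : ℕ) :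
    iteratedDeriv n (fun y => p.eval y) = fun x => (derivative^[n] p).eval x := by
  induction n with
  | zero => simp
  | succ n ih =>
    rw [iteratedDeriv_succ, ih, Function.iterate_succ_apply']
    funext x
    exact Polynomial.deriv (p := derivative^[n] p)

lemma legendreP_eq (n : ℕ) (x : ℝ) : legendreP n x = (legPoly n).eval x := by
  have h : (fun y : ℝ => (y ^ 2 - 1) ^ n) = fun y => (((X ^ 2 - 1) ^ n : Polynomial ℝ)).eval y := by
    funext y; simp
  rw [legendreP, h, iteratedDeriv_polyeval, legPoly]
  simp

noncomputable def pI (p : Polynomial ℝ) : ℝ := ∫ x in (-1:ℝ)..1, p.eval x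

lemma pI_deriv (p : Polynomial ℝ) : pI (derivative p) = p.eval 1 - p.eval (-1) :=
  intervalIntegral.integral_eq_sub_of_hasDerivAt (fun x _ => p.hasDerivAt x)
    (((derivative p).continuous).intervalIntegrable _ _)

lemma pI_add (p q : Polynomial ℝ) : pI (p + q) = pI p + pI q := by
  unfold pI
  rw [← intervalIntegral.integral_add (p.continuous.intervalIntegrable _ _)
    (q.continuous.intervalIntegrable _ _)]
  simp

lemma pI_Cmul (c : ℝ) (p : Polynomial ℝ) : pI (C c * p) = c * pI p := by
  unfold pI
  rw [← intervalIntegral.integral_const_mul]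
  simp

lemma pI_neg (p : Polynomial ℝ) : pI (-p) = - pI p := by
  unfold pI; rw [← intervalIntegral.integral_neg]; simp

noncomputable def antider (p : Polynomial ℝ) : Polynomial ℝ :=
  p.sum fun n a => C (a / (n + 1)) * X ^ (n + 1)

lemma derivative_antider (p : Polynomial ℝ) : derivative (antider p) = p := by
  conv_rhs => rw [← p.sum_C_mul_X_pow_eq]
  unfold antider
  rw [Polynomial.sum, map_sum, Polynomial.sum]
  refine Finset.sum_congr rfl fun n _ => ?_
  rw [derivative_C_mul, derivative_X_pow]
  rw [Nat.add_sub_cancel, ← mul_assoc]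
  congr 1
  rw [← C_mul]
  congr 1
  push_cast
  field_simp

lemma X2sub1 : (X^2 - 1 : Polynomial ℝ) = (X - 1) * (X + 1) := by ring

lemma natDegree_q (n : ℕ) : ((X^2-1:Polynomial ℝ)^n).natDegree = 2*n := by
  rw [natDegree_pow]
  have : ((X^2 - 1:Polynomial ℝ)).natDegree = 2 := by
    have := natDegree_X_pow_sub_C (n := 2) (r := (1:ℝ))
    simpa using this
  rw [this, mul_comm]

lemma monic_q (n : ℕ) : ((X^2-1:Polynomial ℝ)^n).Monic := by
  apply Polynomial.Monic.pow
  have := monic_X_pow_sub_C (1:ℝ) (by norm_num : 2 ≠ 0)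
  simpa using this

lemma coeff_q (n : ℕ) : ((X^2-1:Polynomial ℝ)^n).coeff (2*n) = 1 := by
  have := (monic_q n).coeff_natDegree
  rwa [natDegree_q] at this

lemma coeff_legPoly (n : ℕ) :
    (legPoly n).coeff n = ((2*n).descFactorial n : ℝ) / (2^n * n.factorial) := by
  rw [legPoly, coeff_C_mul, coeff_iterate_derivative, show n + n = 2*n by ring, coeff_q]
  simp [nsmul_eq_mul]
  ring

lemma natDegree_legPoly_le (n : ℕ) : (legPoly n).natDegree ≤ n := by
  rw [legPoly]
  refine (natDegree_C_mul_le _ _).trans ?_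
  refine (natDegree_iterate_derivative _ _).trans ?_
  rw [natDegree_q]; omega

lemma iterate_derivative_eq_C (p : Polynomial ℝ) (n : ℕ) (h : p.natDegree ≤ n) :
    derivative^[n] p = C ((n.factorial : ℝ) * p.coeff n) := by
  have hd : (derivative^[n] p).natDegree = 0 := by
    have := natDegree_iterate_derivative p n; omega
  rw [Polynomial.eq_C_of_natDegree_eq_zero hd]
  congr 1
  have := coeff_iterate_derivative (k := n) p 0
  rw [this]
  simp [Nat.descFactorial_self, nsmul_eq_mul]

lemma pI_sub (p q : Polynomial ℝ) : pI (p - q) = pI p - pI q := by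
  rw [sub_eq_add_neg, pI_add, pI_neg]; ring

lemma pI_parts (q g : Polynomial ℝ) :
    pI (derivative q * g) =
      (q.eval 1 * g.eval 1 - q.eval (-1) * g.eval (-1)) - pI (q * derivative g) := by
  have h := pI_deriv (q * g)
  rw [derivative_mul, pI_add] at h
  simp only [eval_mul] at h ⊢
  linarith

lemma eval_zero_of_pow_dvd {q : Polynomial ℝ} {m : ℕ} (x : ℝ)
    (h : (X - C x)^(m+1) ∣ q) : q.eval x = 0 := by
  obtain ⟨r, rfl⟩ := (dvd_pow_self (X - C x) (Nat.succ_ne_zero m)).trans h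
  simp

lemma pI_parts_iter : ∀ (m : ℕ) (q g : Polynomial ℝ),
    ((X - 1:Polynomial ℝ)^m ∣ q) → ((X + 1:Polynomial ℝ)^m ∣ q) →
    pI (derivative^[m] q * g) = (-1)^m * pI (q * derivative^[m] g) := by
  intro m
  induction m with
  | zero => simp
  | succ m ih =>
    intro q g h1 h2
    have hq1 : (X - 1:Polynomial ℝ)^m ∣ derivative q :=
      by simpa using Polynomial.pow_sub_one_dvd_derivative_of_pow_dvd h1
    have hq2 : (X + 1:Polynomial ℝ)^m ∣ derivative q :=
      by simpa using Polynomial.pow_sub_one_dvd_derivative_of_pow_dvd h2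
    have e1 : q.eval 1 = 0 := eval_zero_of_pow_dvd 1 (by simpa using h1)
    have e2 : q.eval (-1) = 0 := by
      apply eval_zero_of_pow_dvd (-1)
      simpa [sub_neg_eq_add, map_neg] using h2
    rw [Function.iterate_succ_apply, ih (derivative q) g hq1 hq2, pI_parts, e1, e2,
      Function.iterate_succ_apply']
    ring

lemma pI_legPoly_mul (n : ℕ) (g : Polynomial ℝ) (h : g.natDegree < n) :
    pI (legPoly n * g) = 0 := by
  rw [legPoly, mul_assoc, pI_Cmul,
    pI_parts_iter n _ g ⟨(X+1)^n, by rw [X2sub1, mul_pow]⟩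
      ⟨(X-1)^n, by rw [X2sub1, mul_pow]; ring⟩,
    Polynomial.iterate_derivative_eq_zero h, mul_zero]
  have : pI 0 = 0 := by simp [pI]
  rw [this]; ring

noncomputable def Nm (m : ℕ) : ℝ := pI ((1 - X^2)^m)

lemma Nm_zero : Nm 0 = 2 := by simp [Nm, pI]; norm_num

lemma Nm_succ (m : ℕ) : (2*(m:ℝ)+3) * Nm (m+1) = (2*(m:ℝ)+2) * Nm m := by
  have key : derivative (X * (1 - X^2)^(m+1) : Polynomial ℝ)
      = C (2*(m:ℝ)+3) * (1-X^2)^(m+1) - C (2*(m:ℝ)+2) * (1-X^2)^m := by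
    rw [derivative_mul, derivative_pow, derivative_X]
    simp only [derivative_sub, derivative_one, derivative_X_pow]
    push_cast
    simp only [map_add, map_mul, map_ofNat, map_one, map_natCast]
    ring
  have h : pI (C (2*(m:ℝ)+3) * (1-X^2)^(m+1) - C (2*(m:ℝ)+2) * (1-X^2)^m) = 0 := by
    rw [← key, pI_deriv]
    simp
  rw [pI_sub, pI_Cmul, pI_Cmul] at h
  unfold Nm
  linarith

lemma Nm_eq (m : ℕ) :
    Nm m = 2 * 4^m * ((m.factorial:ℝ))^2 / ((2*m+1).factorial) := by
  induction m with
  | zero => simpa using Nm_zero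
  | succ m ih =>
    have h := Nm_succ m
    rw [ih] at h
    have hfac : ((2*(m+1)+1).factorial : ℝ)
        = (2*(m:ℝ)+3) * (2*(m:ℝ)+2) * ((2*m+1).factorial) := by
      have e : 2*(m+1)+1 = (2*m+1) + 1 + 1 := by ring
      rw [e, Nat.factorial_succ, Nat.factorial_succ]
      push_cast; ring
    have hm1 : (((m+1).factorial : ℝ)) = ((m:ℝ)+1) * (m.factorial) := by
      rw [Nat.factorial_succ]; push_cast; ring
    have hp : ((2*m+1).factorial : ℝ) ≠ 0 := by
      exact_mod_cast (Nat.factorial_pos _).ne'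
    have h3 : (2*(m:ℝ)+3) ≠ 0 := by positivity
    rw [hfac, hm1]
    field_simp at h ⊢
    linear_combination h

lemma pI_qm (m : ℕ) : pI ((X^2-1:Polynomial ℝ)^m) = (-1)^m * Nm m := by
  have e : ((X^2-1:Polynomial ℝ))^m = C ((-1:ℝ)^m) * (1-X^2)^m := by
    rw [map_pow, ← mul_pow]
    congr 1
    simp only [map_neg, map_one]
    ring
  rw [e, pI_Cmul, Nm]

lemma pI_legPoly_sq (m : ℕ) : pI (legPoly m * legPoly m) = 2 / (2*(m:ℝ)+1) := by
  have hK := iterate_derivative_eq_C (legPoly m) m (natDegree_legPoly_le m)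
  nth_rewrite 1 [legPoly]
  rw [mul_assoc, pI_Cmul,
    pI_parts_iter m _ _ ⟨(X+1)^m, by rw [X2sub1, mul_pow]⟩
      ⟨(X-1)^m, by rw [X2sub1, mul_pow]; ring⟩,
    hK, mul_comm ((X^2-1:Polynomial ℝ)^m) _, pI_Cmul, pI_qm, coeff_legPoly]
  have hd : ((2*m).descFactorial m : ℝ) * (m.factorial) = ((2*m).factorial : ℝ) := by
    have := Nat.factorial_mul_descFactorial (show m ≤ 2*m by omega)
    have e2 : 2*m - m = m := by omega
    rw [e2] at this
    exact_mod_cast by rw [mul_comm]; exact_mod_cast congrArg (Nat.cast (R := ℝ)) this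
  have hfac : ((2*m+1).factorial : ℝ) = (2*(m:ℝ)+1) * ((2*m).factorial) := by
    rw [Nat.factorial_succ]; push_cast; ring
  rw [Nm_eq, hfac]
  have hp1 : ((m.factorial : ℝ)) ≠ 0 := by exact_mod_cast (Nat.factorial_pos _).ne'
  have hp2 : (((2*m).factorial : ℝ)) ≠ 0 := by exact_mod_cast (Nat.factorial_pos _).ne'
  have h3 : (2*(m:ℝ)+1) ≠ 0 := by positivity
  have h4 : (2:ℝ)^m ≠ 0 := by positivity
  have h5 : (4:ℝ)^m = 2^m * 2^m := by rw [← mul_pow]; norm_num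
  have hd2 : (((m*2).descFactorial m : ℕ) : ℝ) * m.factorial = (((m*2).factorial : ℕ) : ℝ) := by
    rw [show m*2 = 2*m by ring]; exact hd
  field_simp
  ring_nf
  rw [show ((-1:ℝ))^(m*2) = 1 by rw [mul_comm, pow_mul]; norm_num,
    show ((2:ℝ))^(m*2) = 4^m by rw [mul_comm, pow_mul]; norm_num]
  linear_combination (4:ℝ)^m * hd2

noncomputable def Qp (n : ℕ) : Polynomial ℝ :=
  antider (legPoly n) - C ((antider (legPoly n)).eval (-1))

lemma derivative_Qp (n : ℕ) : derivative (Qp n) = legPoly n := by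
  rw [Qp, derivative_sub, derivative_C, sub_zero, derivative_antider]

lemma Qp_eval_neg_one (n : ℕ) : (Qp n).eval (-1) = 0 := by simp [Qp]

lemma Qp_eval_one (n : ℕ) : (Qp n).eval 1 = pI (legPoly n) := by
  have h := pI_deriv (Qp n)
  rw [derivative_Qp, Qp_eval_neg_one] at h
  linarith

lemma coeff_Qp (n : ℕ) : (Qp n).coeff (n+1) = (legPoly n).coeff n / ((n:ℝ)+1) := by
  have h := congrArg (fun p => p.coeff n) (derivative_Qp n)
  simp only [coeff_derivative] at h
  rw [eq_div_iff (by positivity : ((n:ℝ)+1) ≠ 0)]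
  exact h

lemma natDegree_Qp_le (n : ℕ) : (Qp n).natDegree ≤ n + 1 := by
  have hA : (antider (legPoly n)).natDegree ≤ n + 1 := by
    set A := antider (legPoly n) with hA
    by_cases h0 : A.natDegree = 0
    · omega
    · have hd := Polynomial.degree_derivative_eq A (Nat.pos_of_ne_zero h0)
      rw [derivative_antider] at hd
      have := Polynomial.natDegree_eq_of_degree_eq_some hd
      have := natDegree_legPoly_le n
      omega
  rw [Qp]
  refine (natDegree_sub_le _ _).trans ?_
  simp [hA]

lemma pI_antisym (m n : ℕ) :
    pI (legPoly m * Qp n) + pI (legPoly n * Qp m) = (Qp m).eval 1 * (Qp n).eval 1 := by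
  have h := pI_deriv (Qp m * Qp n)
  rw [derivative_mul, derivative_Qp, derivative_Qp, pI_add, eval_mul, eval_mul,
    Qp_eval_neg_one, mul_comm (Qp m) (legPoly n)] at h
  linarith

lemma pI_legPoly_zero {n : ℕ} (hn : 1 ≤ n) : pI (legPoly n) = 0 := by
  have h := pI_legPoly_mul n 1 (by simp; omega)
  simpa using h

lemma legPoly_zero : legPoly 0 = 1 := by
  simp [legPoly]

lemma pI_legPoly_zeroth : pI (legPoly 0) = 2 := by
  rw [legPoly_zero]
  simp [pI]; norm_num

lemma I00 : pI (legPoly 0 * Qp 0) = 2 := by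
  have h := pI_antisym 0 0
  rw [Qp_eval_one, pI_legPoly_zeroth] at h
  linarith

lemma Idiag {n : ℕ} (hn : 1 ≤ n) : pI (legPoly n * Qp n) = 0 := by
  have h := pI_antisym n n
  rw [Qp_eval_one, pI_legPoly_zero hn] at h
  linarith

lemma Ihigh {m n : ℕ} (h : n + 2 ≤ m) : pI (legPoly m * Qp n) = 0 := by
  exact pI_legPoly_mul m (Qp n) (lt_of_le_of_lt (natDegree_Qp_le n) (by omega))

lemma Iskew {m n : ℕ} (h : 1 ≤ m) : pI (legPoly m * Qp n) = - pI (legPoly n * Qp m) := by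
  have hs := pI_antisym m n
  rw [Qp_eval_one m, pI_legPoly_zero h, zero_mul] at hs
  linarith

lemma coeff_legPoly_pos (n : ℕ) : 0 < (legPoly n).coeff n := by
  rw [coeff_legPoly]
  have hd : ((2*n).descFactorial n) ≠ 0 := by
    rw [Ne, Nat.descFactorial_eq_zero_iff_lt]; omega
  have : (0:ℝ) < ((2*n).descFactorial n : ℝ) := by positivity
  positivity

lemma descFact_real (k : ℕ) :
    (((2*k).descFactorial k : ℕ) : ℝ) = ((2*k).factorial : ℝ) / (k.factorial : ℝ) := by
  rw [eq_div_iff (by exact_mod_cast (Nat.factorial_pos k).ne' : ((k.factorial:ℕ):ℝ) ≠ 0)]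
  have h := Nat.factorial_mul_descFactorial (show k ≤ 2*k by omega)
  have e2 : 2*k - k = k := by omega
  rw [e2] at h
  have h2 := congrArg (Nat.cast (R := ℝ)) h
  push_cast at h2
  linear_combination h2

lemma Iadj (n : ℕ) :
    pI (legPoly (n+1) * Qp n) = 2 / ((2*(n:ℝ)+1) * (2*(n:ℝ)+3)) := by
  set c : ℝ := (Qp n).coeff (n+1) / (legPoly (n+1)).coeff (n+1) with hc
  set g : Polynomial ℝ := Qp n - C c * legPoly (n+1) with hg
  have hcoeff : (legPoly (n+1)).coeff (n+1) ≠ 0 := (coeff_legPoly_pos (n+1)).ne'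
  have hgcoeff : g.coeff (n+1) = 0 := by
    rw [hg, coeff_sub, coeff_C_mul, hc]
    field_simp
    simp
  have hgdeg : g.natDegree ≤ n := by
    rw [natDegree_le_iff_coeff_eq_zero]
    intro k hk
    rcases eq_or_lt_of_le (Nat.succ_le_of_lt hk) with h | h
    · rw [← h]; exact hgcoeff
    · apply coeff_eq_zero_of_natDegree_lt
      have h1 : (C c * legPoly (n+1)).natDegree ≤ n + 1 :=
        (natDegree_C_mul_le _ _).trans (natDegree_legPoly_le (n+1))
      have h2 : g.natDegree ≤ n + 1 := by
        rw [hg]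
        exact (natDegree_sub_le _ _).trans (by simp [natDegree_Qp_le n, h1])
      omega
  have hsplit : Qp n = C c * legPoly (n+1) + g := by rw [hg]; ring
  rw [hsplit, mul_add, pI_add,
    show legPoly (n+1) * (C c * legPoly (n+1)) = C c * (legPoly (n+1) * legPoly (n+1)) by ring,
    pI_Cmul, pI_legPoly_sq, pI_legPoly_mul (n+1) g (Nat.lt_succ_of_le hgdeg)]
  have hcv : c = 1 / (2*(n:ℝ)+1) := by
    rw [hc, coeff_Qp, coeff_legPoly, coeff_legPoly, descFact_real, descFact_real]
    have e3 : ((2*(n+1)).factorial : ℝ)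
        = (2*(n:ℝ)+2) * (2*(n:ℝ)+1) * ((2*n).factorial : ℝ) := by
      have e : 2*(n+1) = (2*n+1) + 1 := by ring
      rw [e, Nat.factorial_succ, Nat.factorial_succ]
      push_cast; ring
    have e4 : (((n+1).factorial : ℕ) : ℝ) = ((n:ℝ)+1) * (n.factorial : ℝ) := by
      rw [Nat.factorial_succ]; push_cast; ring
    rw [e3, e4]
    have p1 : ((n.factorial : ℕ) : ℝ) ≠ 0 := by exact_mod_cast (Nat.factorial_pos n).ne'
    have p2 : (((2*n).factorial : ℕ) : ℝ) ≠ 0 := by exact_mod_cast (Nat.factorial_pos _).ne'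
    have p3 : (2:ℝ)^n ≠ 0 := by positivity
    have p4 : ((n:ℝ)+1) ≠ 0 := by positivity
    have p5 : (2*(n:ℝ)+1) ≠ 0 := by positivity
    have p6 : (2*(n:ℝ)+2) ≠ 0 := by positivity
    field_simp
    ring
  rw [hcv, add_zero]
  push_cast
  rw [div_mul_div_comm, one_mul]
  congr 1
  ring

lemma scaledLegendre_eq (t T : ℝ) (j : ℕ) (x : ℝ) :
    scaledLegendre t T j x
      = Real.sqrt ((2*j+1)/(T-t)) * (legPoly j).eval (2*(x-t)/(T-t) - 1) := by
  rw [scaledLegendre, legendreP_eq]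

lemma continuous_scaledLegendre (t T : ℝ) (j : ℕ) : Continuous (scaledLegendre t T j) := by
  have : Continuous fun x : ℝ => (legPoly j).eval (2*(x-t)/(T-t) - 1) :=
    (legPoly j).continuous.comp (by continuity)
  rw [funext (scaledLegendre_eq t T j)]; exact continuous_const.mul this

lemma sigma_hasDerivAt (t T : ℝ) (u : ℝ) :
    HasDerivAt (fun x : ℝ => 2*(x-t)/(T-t) - 1) (2/(T-t)) u := by
  have h := ((((hasDerivAt_id u).sub_const t).const_mul 2).div_const (T-t)).sub_const 1
  simpa using h

lemma inner_integral {t T : ℝ} (ht : t < T) (j : ℕ) (s : ℝ) :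
    (∫ u in t..s, scaledLegendre t T j u)
      = Real.sqrt ((2*j+1)/(T-t)) * ((T-t)/2) * (Qp j).eval (2*(s-t)/(T-t) - 1) := by
  have hD : T - t ≠ 0 := by intro h; linarith [sub_pos.mpr ht]
  have key : ∀ u : ℝ, HasDerivAt
      (fun x => Real.sqrt ((2*j+1)/(T-t)) * ((T-t)/2) * (Qp j).eval (2*(x-t)/(T-t) - 1))
      (scaledLegendre t T j u) u := by
    intro u
    have h1 := ((Qp j).hasDerivAt (2*(u-t)/(T-t) - 1)).comp u (sigma_hasDerivAt t T u)
    have h2 := h1.const_mul (Real.sqrt ((2*j+1)/(T-t)) * ((T-t)/2))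
    convert h2 using 1
    case e'_4 => rfl
    case e'_5 => rfl
    case e'_8 => rfl
    rw [scaledLegendre_eq, derivative_Qp, mul_assoc]
    congr 1
    field_simp
  rw [intervalIntegral.integral_eq_sub_of_hasDerivAt (fun u _ => key u)
    ((continuous_scaledLegendre t T j).intervalIntegrable _ _)]
  have h3 : 2*(t-t)/(T-t) - 1 = -1 := by simp
  rw [h3, Qp_eval_neg_one, mul_zero, sub_zero]

lemma Cval {t T : ℝ} (ht : t < T) (j2 j1 : ℕ) :
    (∫ s in t..T, scaledLegendre t T j2 s * ∫ u in t..s, scaledLegendre t T j1 u)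
      = Real.sqrt ((2*j2+1)/(T-t)) * Real.sqrt ((2*j1+1)/(T-t)) * ((T-t)^2/4)
        * pI (legPoly j2 * Qp j1) := by
  have hD : T - t ≠ 0 := by intro h; linarith [sub_pos.mpr ht]
  set a2 := Real.sqrt ((2*(j2:ℝ)+1)/(T-t)) with ha2
  set a1 := Real.sqrt ((2*(j1:ℝ)+1)/(T-t)) with ha1
  set K := a2 * a1 * ((T-t)/2) with hK
  have hint : ∀ s : ℝ, scaledLegendre t T j2 s * ∫ u in t..s, scaledLegendre t T j1 u
      = K * (legPoly j2 * Qp j1).eval (2*(s-t)/(T-t)-1) := by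
    intro s
    rw [inner_integral ht j1 s, scaledLegendre_eq, eval_mul, hK]
    ring
  have hcont : Continuous fun s : ℝ => K * (legPoly j2 * Qp j1).eval (2*(s-t)/(T-t)-1) :=
    continuous_const.mul ((legPoly j2 * Qp j1).continuous.comp (by continuity))
  have key : ∀ s : ℝ, HasDerivAt
      (fun x => K * ((T-t)/2) * (antider (legPoly j2 * Qp j1)).eval (2*(x-t)/(T-t)-1))
      (K * (legPoly j2 * Qp j1).eval (2*(s-t)/(T-t)-1)) s := by
    intro s
    have h1 := ((antider (legPoly j2 * Qp j1)).hasDerivAt (2*(s-t)/(T-t) - 1)).comp s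
      (sigma_hasDerivAt t T s)
    have h2 := h1.const_mul (K * ((T-t)/2))
    convert h2 using 1
    case e'_4 => rfl
    case e'_5 => rfl
    case e'_8 => rfl
    rw [derivative_antider]
    field_simp
  have : (∫ s in t..T, scaledLegendre t T j2 s * ∫ u in t..s, scaledLegendre t T j1 u)
      = ∫ s in t..T, K * (legPoly j2 * Qp j1).eval (2*(s-t)/(T-t)-1) := by
    simp only [hint]
  rw [this, intervalIntegral.integral_eq_sub_of_hasDerivAt (fun s _ => key s)
    (hcont.intervalIntegrable _ _)]
  have hT : 2*(T-t)/(T-t) - 1 = 1 := by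
    rw [mul_div_assoc, div_self hD]; norm_num
  have htt : 2*(t-t)/(T-t) - 1 = -1 := by simp
  have hpi : pI (legPoly j2 * Qp j1)
      = (antider (legPoly j2 * Qp j1)).eval 1 - (antider (legPoly j2 * Qp j1)).eval (-1) := by
    rw [← pI_deriv, derivative_antider]
  rw [hT, htt, hpi, hK]
  ring

lemma Iskew2 {m n : ℕ} (h : 1 ≤ n) : pI (legPoly m * Qp n) = - pI (legPoly n * Qp m) := by
  have hs := pI_antisym m n
  rw [Qp_eval_one n, pI_legPoly_zero h, mul_zero] at hs
  linarith


/-- Exact values of the double Fourier--Legendre coefficients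
`C(j₂, j₁) = ∫_t^T φ_{j₂}(s) ∫_t^s φ_{j₁}(u) du ds`. -/
theorem double_fourier_legendre_coefficients
    (t T : ℝ) (ht : t < T)
    (C : ℕ → ℕ → ℝ)
    (hC : ∀ j2 j1 : ℕ, C j2 j1 =
      ∫ s in t..T, scaledLegendre t T j2 s * ∫ u in t..s, scaledLegendre t T j1 u) :
    C 0 0 = (T - t) / 2 ∧
    (∀ i : ℕ, 1 ≤ i →
      C i (i - 1) = (T - t) / (2 * Real.sqrt (4 * (i : ℝ) ^ 2 - 1)) ∧
      C (i - 1) i = -((T - t) / (2 * Real.sqrt (4 * (i : ℝ) ^ 2 - 1)))) ∧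
    (∀ j1 j2 : ℕ, ¬(j1 = 0 ∧ j2 = 0) → j2 ≠ j1 + 1 → j1 ≠ j2 + 1 →
      C j2 j1 = 0) := by
  have hΔ : 0 < T - t := sub_pos.mpr ht
  have hD : T - t ≠ 0 := hΔ.ne'
  have sqmul : ∀ j2 j1 : ℕ, Real.sqrt ((2*(j2:ℝ)+1)/(T-t)) * Real.sqrt ((2*(j1:ℝ)+1)/(T-t))
      = Real.sqrt ((2*(j2:ℝ)+1)*(2*(j1:ℝ)+1)) / (T-t) := by
    intro j2 j1
    rw [← Real.sqrt_mul (div_nonneg (by positivity) hΔ.le),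
      show (2*(j2:ℝ)+1)/(T-t)*((2*(j1:ℝ)+1)/(T-t))
        = ((2*(j2:ℝ)+1)*(2*(j1:ℝ)+1))/(T-t)^2 by rw [div_mul_div_comm, ← sq],
      Real.sqrt_div (by positivity), Real.sqrt_sq hΔ.le]
  refine ⟨?_, ?_, ?_⟩
  · rw [hC 0 0, Cval ht 0 0, I00, sqmul 0 0]
    norm_num
    field_simp
    ring
  · intro i hi
    obtain ⟨n, rfl⟩ : ∃ n, i = n + 1 := ⟨i - 1, by omega⟩
    have e1 : n + 1 - 1 = n := by omega
    rw [e1]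
    have hP : (0:ℝ) < (2*(n:ℝ)+1)*(2*(n:ℝ)+3) := by positivity
    have hs := Real.mul_self_sqrt hP.le
    have hsP : (0:ℝ) < Real.sqrt ((2*(n:ℝ)+1)*(2*(n:ℝ)+3)) := Real.sqrt_pos.mpr hP
    have e3 : 4*(((n+1:ℕ)):ℝ)^2 - 1 = (2*(n:ℝ)+1)*(2*(n:ℝ)+3) := by push_cast; ring
    have s1 : Real.sqrt (2*(n:ℝ)+1) ^ 2 = 2*(n:ℝ)+1 := Real.sq_sqrt (by positivity)
    have s2 : Real.sqrt (2*(n:ℝ)+3) ^ 2 = 2*(n:ℝ)+3 := Real.sq_sqrt (by positivity)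
    have s12 : Real.sqrt (2*(n:ℝ)+1) ^ 2 * Real.sqrt (2*(n:ℝ)+3) ^ 2
        = (2*(n:ℝ)+1)*(2*(n:ℝ)+3) := by rw [s1, s2]
    have s3 : Real.sqrt ((2*(n:ℝ)+1)*(2*(n:ℝ)+3)) ^ 2
        = (2*(n:ℝ)+1)*(2*(n:ℝ)+3) := Real.sq_sqrt hP.le
    constructor
    · rw [hC, Cval ht, Iadj n, sqmul, e3,
        show (2*((n+1:ℕ):ℝ)+1)*(2*(n:ℝ)+1) = (2*(n:ℝ)+1)*(2*(n:ℝ)+3) by push_cast; ring]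
      rw [eq_div_iff (by positivity)]
      field_simp
      linear_combination 4 * s3
    · rw [hC, Cval ht, Iskew2 (Nat.le_add_left 1 n), Iadj n, sqmul, e3,
        show (2*(n:ℝ)+1)*(2*((n+1:ℕ):ℝ)+1) = (2*(n:ℝ)+1)*(2*(n:ℝ)+3) by push_cast; ring]
      rw [show -((T-t)/(2*Real.sqrt ((2*(n:ℝ)+1)*(2*(n:ℝ)+3))))
          = (-(T-t))/(2*Real.sqrt ((2*(n:ℝ)+1)*(2*(n:ℝ)+3))) by ring,
        eq_div_iff (by positivity)]
      field_simp
      linear_combination (-4) * s3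
  · intro j1 j2 h0 h1 h2
    have hz : pI (legPoly j2 * Qp j1) = 0 := by
      rcases (show (j1 = j2 ∧ 1 ≤ j1) ∨ j1+2 ≤ j2 ∨ j2+2 ≤ j1 by omega) with ⟨rfl, hge⟩ | h | h
      · exact Idiag hge
      · exact Ihigh h
      · rw [Iskew2 (by omega), Ihigh h, neg_zero]
    rw [hC, Cval ht, hz, mul_zero]
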